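/- arXiv:1910.09779 — 7 statements merged into one kernel-verified Lean document; each statement's English description precedes it below -/
import Mathlib

section
/- (Variational lower bound for f-divergences, Lemma 2.1, inequality direction.) For every bounded measurable T : X → ℝ such that f*(T(x)) is finite for all x and x ↦ f*(T(x)) is Q-integrable, one has I_f(T; P, Q) = E_P[T] − E_Q[f*∘T] ≤ D_f(P‖Q). -/
open MeasureTheory Real Set

/-- Lemma 2.1, inequality direction: the variational objective
`I_f(T; P, Q) = E_P[T] - E_Q[f* ∘ T]` lower-bounds the f-divergence `D_f(P‖Q)`. -/
theorem f_divergence_variational_lower_bound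
    {X : Type*} [MeasurableSpace X]
    (P Q : Measure X) [IsProbabilityMeasure P] [IsProbabilityMeasure Q]
    (hPQ : P ≪ Q)
    (f f' fstar : ℝ → ℝ)
    (hf_conv : ConvexOn ℝ (Set.Ici (0 : ℝ)) f)
    (hf_diff : ∀ u ∈ Set.Ici (0 : ℝ), HasDerivWithinAt f (f' u) (Set.Ici (0 : ℝ)) u)
    (hf_one : f 1 = 0)
    (hfstar : ∀ t : ℝ, fstar t = sSup {y : ℝ | ∃ u : ℝ, 0 ≤ u ∧ y = t * u - f u})
    (hDf_fin : Integrable (fun x => f ((P.rnDeriv Q x).toReal)) Q)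
    (T : X → ℝ) (hT_meas : Measurable T) (hT_bdd : ∃ C : ℝ, ∀ x, |T x| ≤ C)
    (hfstar_fin : ∀ x, BddAbove {y : ℝ | ∃ u : ℝ, 0 ≤ u ∧ y = T x * u - f u})
    (hfstarT_int : Integrable (fun x => fstar (T x)) Q) :
    ∫ x, T x ∂P - ∫ x, fstar (T x) ∂Q ≤ ∫ x, f ((P.rnDeriv Q x).toReal) ∂Q := by
  -- rewrite E_P[T] as E_Q[r·T]
  have hTP : ∫ x, T x ∂P = ∫ x, (P.rnDeriv Q x).toReal * T x ∂Q := by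
    rw [← MeasureTheory.integral_rnDeriv_smul hPQ]
    simp [smul_eq_mul]
  -- integrability of r·T over Q
  obtain ⟨C, hC⟩ := hT_bdd
  have hr_int : Integrable (fun x => (P.rnDeriv Q x).toReal) Q :=
    Measure.integrable_toReal_rnDeriv
  have hrT_int : Integrable (fun x => (P.rnDeriv Q x).toReal * T x) Q := by
    have h := hr_int.bdd_mul hT_meas.aestronglyMeasurable (c := C) (Filter.Eventually.of_forall fun x => hC x)
    simpa [mul_comm] using h
  -- pointwise: r·T - fstar(T) ≤ f(r)
  have hpt : ∀ x, (P.rnDeriv Q x).toReal * T x - fstar (T x)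
      ≤ f ((P.rnDeriv Q x).toReal) := by
    intro x
    have hmem : T x * (P.rnDeriv Q x).toReal - f ((P.rnDeriv Q x).toReal) ∈
        {y : ℝ | ∃ u : ℝ, 0 ≤ u ∧ y = T x * u - f u} :=
      ⟨(P.rnDeriv Q x).toReal, ENNReal.toReal_nonneg, rfl⟩
    have := le_csSup (hfstar_fin x) hmem
    rw [← hfstar (T x)] at this
    linarith [this, mul_comm ((P.rnDeriv Q x).toReal) (T x)]
  rw [hTP, ← integral_sub hrT_int hfstarT_int]
  exact integral_mono (hrT_int.sub hfstarT_int) hDf_fin hpt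
end

section
/- (Variational lower bound for f-divergences, Lemma 2.1, attainment direction.) Suppose the Radon–Nikodym derivative dP/dQ is Q-essentially bounded, and the functions x ↦ f(dP/dQ(x)) and x ↦ f*(f'(dP/dQ(x))) are Q-integrable. Then the choice T = f'∘(dP/dQ) attains the f-divergence: E_P[f'∘(dP/dQ)] − E_Q[f*∘f'∘(dP/dQ)] = D_f(P‖Q). -/
open MeasureTheory Real Set

/-- Lemma 2.1, attainment direction: the choice `T = f' ∘ (dP/dQ)` attains the
f-divergence in the variational representation. -/
theorem f_divergence_variational_attainment
    {X : Type*} [MeasurableSpace X]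
    (P Q : Measure X) [IsProbabilityMeasure P] [IsProbabilityMeasure Q]
    (hPQ : P ≪ Q)
    (f f' fstar : ℝ → ℝ)
    (hf_conv : ConvexOn ℝ (Set.Ici (0 : ℝ)) f)
    (hf_diff : ∀ u ∈ Set.Ici (0 : ℝ), HasDerivWithinAt f (f' u) (Set.Ici (0 : ℝ)) u)
    (hf_one : f 1 = 0)
    (hfstar : ∀ t : ℝ, fstar t = sSup {y : ℝ | ∃ u : ℝ, 0 ≤ u ∧ y = t * u - f u})
    (hrho_bdd : ∃ C : ℝ, ∀ᵐ x ∂Q, (P.rnDeriv Q x).toReal ≤ C)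
    (hf_rho_int : Integrable (fun x => f ((P.rnDeriv Q x).toReal)) Q)
    (hfstar_f'_rho_int : Integrable (fun x => fstar (f' ((P.rnDeriv Q x).toReal))) Q) :
    ∫ x, f' ((P.rnDeriv Q x).toReal) ∂P - ∫ x, fstar (f' ((P.rnDeriv Q x).toReal)) ∂Q
      = ∫ x, f ((P.rnDeriv Q x).toReal) ∂Q := by
  -- Tangent line inequality: f v ≥ f u + f' u * (v - u) for u, v ≥ 0
  have tangent : ∀ u ∈ Set.Ici (0:ℝ), ∀ v ∈ Set.Ici (0:ℝ),
      f u + f' u * (v - u) ≤ f v := by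
    intro u hu v hv
    rcases lt_trichotomy u v with h | h | h
    · have := hf_conv.le_slope_of_hasDerivWithinAt hu hv h (hf_diff u hu)
      rw [slope_def_field] at this
      have hne : v - u ≠ 0 := sub_ne_zero.2 (ne_of_gt h)
      have := (le_div_iff₀ (by linarith)).mp this
      linarith
    · simp [h]
    · have := hf_conv.slope_le_of_hasDerivWithinAt hv hu h (hf_diff u hu)
      rw [slope_def_field] at this
      have := (div_le_iff₀ (by linarith : (0:ℝ) < u - v)).mp this
      linarith
  -- fstar (f' u) = f' u * u - f u for u ≥ 0
  have key : ∀ u : ℝ, 0 ≤ u → fstar (f' u) = f' u * u - f u := by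
    intro u hu
    rw [hfstar]
    refine IsGreatest.csSup_eq ⟨⟨u, hu, rfl⟩, ?_⟩
    rintro y ⟨v, hv, rfl⟩
    have := tangent u hu v hv
    nlinarith
  set ρ := fun x => (P.rnDeriv Q x).toReal with hρ
  have hρ0 : ∀ x, 0 ≤ ρ x := fun x => ENNReal.toReal_nonneg
  -- pointwise identity for the integrand
  have hpt : (fun x => ρ x * f' (ρ x))
      = fun x => f (ρ x) + fstar (f' (ρ x)) := by
    funext x
    rw [key (ρ x) (hρ0 x)]; ring
  have h1 : ∫ x, f' (ρ x) ∂P = ∫ x, ρ x * f' (ρ x) ∂Q := by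
    rw [← MeasureTheory.integral_rnDeriv_smul hPQ]
    simp [smul_eq_mul, hρ]
  rw [h1, hpt, integral_add hf_rho_int hfstar_f'_rho_int]
  ring
end

section
/- (Proposition 3.3.) Let R be a set of bounded measurable functions r : X → [0,∞) that contains the constant function 1. Suppose T : X → ℝ is bounded measurable with T(x) in the image of f' on [0,∞) for every x, and x ↦ f*(T(x)) is Q-integrable. Then I_f(T; P, Q) ≤ inf_{r ∈ R} ℓ_f(T, r; P, Q) ≤ I_W(T; P, Q). -/
open MeasureTheory Real Set

/-- Tangent line inequality for convex functions on `Ici 0`. -/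
lemma tangent_le_aux {f : ℝ → ℝ} {f' : ℝ → ℝ}
    (hf_conv : ConvexOn ℝ (Set.Ici (0 : ℝ)) f)
    (hf_diff : ∀ u ∈ Set.Ici (0 : ℝ), HasDerivWithinAt f (f' u) (Set.Ici (0 : ℝ)) u)
    {u0 u : ℝ} (hu0 : 0 ≤ u0) (hu : 0 ≤ u) :
    f u0 + f' u0 * (u - u0) ≤ f u := by
  rcases lt_trichotomy u0 u with h | h | h
  · have hs := hf_conv.le_slope_of_hasDerivWithinAt hu0 hu h (hf_diff u0 hu0)
    rw [slope_def_field, le_div_iff₀ (by linarith)] at hs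
    nlinarith [hs]
  · simp [h]
  · have hs := hf_conv.slope_le_of_hasDerivWithinAt hu hu0 h (hf_diff u0 hu0)
    rw [slope_def_field, div_le_iff₀ (by linarith)] at hs
    nlinarith [hs]

/-- Proposition 3.3: for any set `R` of bounded measurable nonnegative importance
weights containing the constant function 1,
`I_f(T; P, Q) ≤ inf_{r ∈ R} ℓ_f(T, r; P, Q) ≤ I_W(T; P, Q)`. -/
theorem inf_ell_f_between_I_f_and_I_W
    {X : Type*} [MeasurableSpace X]
    (P Q : Measure X) [IsProbabilityMeasure P] [IsProbabilityMeasure Q]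
    (hPQ : P ≪ Q)
    (f f' fstar : ℝ → ℝ)
    (hf_conv : ConvexOn ℝ (Set.Ici (0 : ℝ)) f)
    (hf_diff : ∀ u ∈ Set.Ici (0 : ℝ), HasDerivWithinAt f (f' u) (Set.Ici (0 : ℝ)) u)
    (hf_one : f 1 = 0)
    (hfstar : ∀ t : ℝ, fstar t = sSup {y : ℝ | ∃ u : ℝ, 0 ≤ u ∧ y = t * u - f u})
    (R : Set (X → ℝ))
    (hR : ∀ r ∈ R, Measurable r ∧ (∃ C : ℝ, ∀ x, |r x| ≤ C) ∧ ∀ x, 0 ≤ r x)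
    (hR_one : (fun _ => (1 : ℝ)) ∈ R)
    (T : X → ℝ) (hT_meas : Measurable T) (hT_bdd : ∃ C : ℝ, ∀ x, |T x| ≤ C)
    (hT_im : ∀ x, ∃ u : ℝ, 0 ≤ u ∧ f' u = T x)
    (hfstarT_int : Integrable (fun x => fstar (T x)) Q) :
    ∫ x, T x ∂P - ∫ x, fstar (T x) ∂Q
      ≤ sInf {ℓ : ℝ | ∃ r ∈ R, ℓ = ∫ x, f (r x) ∂Q + ∫ x, T x ∂P - ∫ x, r x * T x ∂Q} ∧
    sInf {ℓ : ℝ | ∃ r ∈ R, ℓ = ∫ x, f (r x) ∂Q + ∫ x, T x ∂P - ∫ x, r x * T x ∂Q}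
      ≤ ∫ x, T x ∂P - ∫ x, T x ∂Q := by
  obtain ⟨CT, hCT⟩ := hT_bdd
  -- continuity of f on Ici 0
  have hf_cont : ContinuousOn f (Set.Ici (0:ℝ)) := fun u hu =>
    (hf_diff u hu).continuousWithinAt
  have h_contmax : Continuous (fun t : ℝ => f (max t 0)) := by
    have h1 : Continuous (fun t : ℝ => max t 0) :=
      (continuous_id : Continuous fun t : ℝ => t).max continuous_const
    exact hf_cont.comp_continuous h1 fun x => Set.mem_Ici.mpr (le_max_right _ _)
  have key : ∀ x : X, ∀ u : ℝ, 0 ≤ u → T x * u - f u ≤ fstar (T x) := by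
    intro x u hu
    rw [hfstar]
    obtain ⟨u0, hu0, hb⟩ := hT_im x
    apply le_csSup
    · refine ⟨T x * u0 - f u0, fun y hy => ?_⟩
      obtain ⟨u1, hu1, rfl⟩ := hy
      have := tangent_le_aux hf_conv hf_diff hu0 hu1
      rw [hb] at this; nlinarith [this]
    · exact ⟨u, hu, rfl⟩
  -- T is integrable wrt P and Q
  have hT_intQ : Integrable T Q :=
    (integrable_const CT).mono' hT_meas.aestronglyMeasurable (Filter.Eventually.of_forall hCT)
  have hT_intP : Integrable T P :=
    (integrable_const CT).mono' hT_meas.aestronglyMeasurable (Filter.Eventually.of_forall hCT)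
  -- lower bound on every element of the set
  have hlow : ∀ ℓ ∈ {ℓ : ℝ | ∃ r ∈ R, ℓ = ∫ x, f (r x) ∂Q + ∫ x, T x ∂P - ∫ x, r x * T x ∂Q},
      ∫ x, T x ∂P - ∫ x, fstar (T x) ∂Q ≤ ℓ := by
    rintro ℓ ⟨r, hrR, rfl⟩
    obtain ⟨hr_meas, ⟨Cr, hCr⟩, hr_nonneg⟩ := hR r hrR
    have hfr_eq : ∀ x, f (r x) = (fun t : ℝ => f (max t 0)) (r x) := by
      intro x; simp [max_eq_left (hr_nonneg x)]
    -- integrability of f ∘ r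
    obtain ⟨M, hM⟩ : ∃ M, ∀ t ∈ Set.Icc (-Cr) Cr, |(fun t : ℝ => f (max t 0)) t| ≤ M := by
      obtain ⟨M, hM⟩ := (isCompact_Icc (a := -Cr) (b := Cr)).exists_bound_of_continuousOn
        (h_contmax.continuousOn (s := Set.Icc (-Cr) Cr))
      exact ⟨M, hM⟩
    have hfr_int : Integrable (fun x => f (r x)) Q := by
      refine (integrable_const M).mono' ((h_contmax.measurable.comp hr_meas).aestronglyMeasurable
        |>.congr ?_) (Filter.Eventually.of_forall fun x => ?_)
      · exact Filter.Eventually.of_forall fun x => (hfr_eq x).symm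
      · rw [hfr_eq x]
        exact hM (r x) (abs_le.mp (hCr x))
    have hrT_int : Integrable (fun x => r x * T x) Q := by
      refine (integrable_const (Cr * CT)).mono' ((hr_meas.mul hT_meas).aestronglyMeasurable)
        (Filter.Eventually.of_forall fun x => ?_)
      rw [Real.norm_eq_abs, abs_mul]
      exact mul_le_mul (hCr x) (hCT x) (abs_nonneg _)
        ((abs_nonneg _).trans (hCr x))
    have hmono : ∫ x, r x * T x - fstar (T x) ∂Q ≤ ∫ x, f (r x) ∂Q := by
      apply integral_mono (hrT_int.sub hfstarT_int) hfr_int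
      intro x
      have := key x (r x) (hr_nonneg x)
      simp only [Pi.sub_apply]; nlinarith [this]
    rw [integral_sub hrT_int hfstarT_int] at hmono
    linarith
  refine ⟨le_csInf ⟨_, (fun _ => (1:ℝ)), hR_one, rfl⟩ hlow, ?_⟩
  have h1 : (∫ x, f ((fun _ => (1:ℝ)) x) ∂Q + ∫ x, T x ∂P - ∫ x, (fun _ => (1:ℝ)) x * T x ∂Q)
      ∈ {ℓ : ℝ | ∃ r ∈ R, ℓ = ∫ x, f (r x) ∂Q + ∫ x, T x ∂P - ∫ x, r x * T x ∂Q} :=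
    ⟨(fun _ => (1:ℝ)), hR_one, rfl⟩
  have := csInf_le ⟨_, hlow⟩ h1
  simpa [hf_one] using this
end

section
/- (Value of the KL-WGAN inner minimization.) Let f(u) = u·log u (with f(0) = 0) and let T : X → ℝ be bounded measurable. For r₀ = e^T / E_Q[e^T] one has E_Q[r₀·log r₀] − E_Q[r₀·T] = −log E_Q[e^T]; consequently inf_{r ∈ Δ(Q)} ℓ_f(T, r; P, Q) = E_P[T] − log E_Q[e^T]. -/
open MeasureTheory Real Set

lemma aux_key_ineq (u s : ℝ) (hu : 0 ≤ u) :
    u - Real.exp s ≤ u * Real.log u - u * s := by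
  rcases hu.eq_or_lt with h | h
  · rw [← h]
    simp
    positivity
  · have h1 := Real.add_one_le_exp (s - Real.log u)
    rw [Real.exp_sub, Real.exp_log h] at h1
    have h2 := mul_le_mul_of_nonneg_right h1 h.le
    rw [div_mul_cancel₀ _ h.ne'] at h2
    nlinarith

lemma aux_abs_mul_log_le {u C : ℝ} (h0 : 0 ≤ u) (h1 : u ≤ C) :
    |u * Real.log u| ≤ 1 + C * |Real.log C| := by
  have hC : 0 ≤ C := h0.trans h1
  rcases h0.eq_or_lt with h | h
  · rw [← h]
    simp
    positivity
  rcases le_or_gt u 1 with h2 | h2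
  · have hlog : Real.log u ≤ 0 := Real.log_nonpos h0 h2
    have hinv : Real.log u⁻¹ ≤ u⁻¹ - 1 := Real.log_le_sub_one_of_pos (by positivity)
    rw [Real.log_inv] at hinv
    have h3 := mul_le_mul_of_nonneg_left hinv h0
    rw [mul_sub, mul_inv_cancel₀ h.ne'] at h3
    rw [abs_of_nonpos (mul_nonpos_of_nonneg_of_nonpos h0 hlog)]
    nlinarith [mul_nonneg hC (abs_nonneg (Real.log C))]
  · have hlogu : 0 ≤ Real.log u := Real.log_nonneg h2.le
    have hloguC : Real.log u ≤ Real.log C := Real.log_le_log h h1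
    rw [abs_of_nonneg (mul_nonneg h0 hlogu)]
    have h4 : u * Real.log u ≤ C * |Real.log C| :=
      le_trans (mul_le_mul h1 hloguC hlogu hC)
        (mul_le_mul_of_nonneg_left (le_abs_self _) hC)
    linarith

lemma aux_integrable {X : Type*} [MeasurableSpace X] {μ : Measure X} [IsFiniteMeasure μ]
    {g : X → ℝ} (hg : Measurable g) {C : ℝ} (h : ∀ x, |g x| ≤ C) :
    Integrable g μ :=
  ⟨hg.aestronglyMeasurable,
    HasFiniteIntegral.of_bounded (C := C) (ae_of_all _ fun x => by simpa using h x)⟩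

/-- Value of the KL-WGAN inner minimization: with `f(u) = u log u` and
`r₀ = e^T / E_Q[e^T]`, one has `E_Q[r₀ log r₀] - E_Q[r₀ T] = -log E_Q[e^T]`, hence
`inf_{r ∈ Δ(Q)} ℓ_f(T, r; P, Q) = E_P[T] - log E_Q[e^T]`. -/
theorem kl_wgan_inner_value
    {X : Type*} [MeasurableSpace X]
    (P Q : Measure X) [IsProbabilityMeasure P] [IsProbabilityMeasure Q]
    (hPQ : P ≪ Q)
    (T : X → ℝ) (hT_meas : Measurable T) (hT_bdd : ∃ C : ℝ, ∀ x, |T x| ≤ C)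
    (r₀ : X → ℝ) (hr₀ : r₀ = fun x => Real.exp (T x) / ∫ y, Real.exp (T y) ∂Q) :
    (∫ x, r₀ x * Real.log (r₀ x) ∂Q - ∫ x, r₀ x * T x ∂Q
      = -Real.log (∫ y, Real.exp (T y) ∂Q)) ∧
    sInf {ℓ : ℝ | ∃ r : X → ℝ, Measurable r ∧ (∃ C : ℝ, ∀ x, |r x| ≤ C) ∧
        (∀ x, 0 ≤ r x) ∧ (∫ x, r x ∂Q = 1) ∧
        ℓ = ∫ x, r x * Real.log (r x) ∂Q + ∫ x, T x ∂P - ∫ x, r x * T x ∂Q}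
      = ∫ x, T x ∂P - Real.log (∫ y, Real.exp (T y) ∂Q) := by
  obtain ⟨C₀, hC₀⟩ := hT_bdd
  set C := |C₀| with hCdef
  have hTC : ∀ x, |T x| ≤ C := fun x => (hC₀ x).trans (le_abs_self _)
  set Z := ∫ y, Real.exp (T y) ∂Q with hZdef
  have hexp_bdd : ∀ x, |Real.exp (T x)| ≤ Real.exp C := by
    intro x
    rw [abs_of_nonneg (Real.exp_pos _).le]
    exact Real.exp_le_exp.mpr ((le_abs_self _).trans (hTC x))
  have hexp_int : Integrable (fun x => Real.exp (T x)) Q :=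
    aux_integrable (Real.measurable_exp.comp hT_meas) hexp_bdd
  have hZpos : 0 < Z := by
    have h1 : ∫ (_ : X), Real.exp (-C) ∂Q ≤ Z := by
      apply integral_mono (integrable_const _) hexp_int
      intro x
      exact Real.exp_le_exp.mpr (neg_le_of_abs_le (hTC x))
    rw [integral_const] at h1
    simp at h1
    exact lt_of_lt_of_le (Real.exp_pos _) h1
  -- generic lower bound
  have key : ∀ r : X → ℝ, Measurable r → (∃ D : ℝ, ∀ x, |r x| ≤ D) → (∀ x, 0 ≤ r x) →
      (∫ x, r x ∂Q = 1) →
      -Real.log Z ≤ ∫ x, r x * Real.log (r x) ∂Q - ∫ x, r x * T x ∂Q := by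
    rintro r hr_meas ⟨D₀, hD₀⟩ hr_nonneg hr_int1
    set D := |D₀| with hDdef
    have hrD : ∀ x, |r x| ≤ D := fun x => (hD₀ x).trans (le_abs_self _)
    have hrD' : ∀ x, r x ≤ D := fun x => (le_abs_self _).trans (hrD x)
    have hr_int : Integrable r Q := aux_integrable hr_meas hrD
    have hrT_int : Integrable (fun x => r x * T x) Q := by
      apply aux_integrable (hr_meas.mul hT_meas) (C := D * C)
      intro x
      rw [Pi.mul_apply, abs_mul]
      exact mul_le_mul (hrD x) (hTC x) (abs_nonneg _) (le_trans (abs_nonneg _) (hrD x))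
    have hrlog_int : Integrable (fun x => r x * Real.log (r x)) Q := by
      apply aux_integrable (hr_meas.mul (Real.measurable_log.comp hr_meas))
        (C := 1 + D * |Real.log D|)
      intro x
      exact aux_abs_mul_log_le (hr_nonneg x) (hrD' x)
    have hpt : ∀ x, r x - Real.exp (T x) / Z
        ≤ r x * Real.log (r x) - (r x * T x - Real.log Z * r x) := by
      intro x
      have h := aux_key_ineq (r x) (T x - Real.log Z) (hr_nonneg x)
      rw [Real.exp_sub, Real.exp_log hZpos] at h
      have h2 : r x * (T x - Real.log Z) = r x * T x - Real.log Z * r x := by ring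
      linarith [h, h2.le]
    have hmono := integral_mono (hr_int.sub (hexp_int.div_const Z))
      (hrlog_int.sub (hrT_int.sub (hr_int.const_mul (Real.log Z)))) hpt
    simp only [Pi.sub_apply] at hmono
    have h5 : Integrable (fun x => r x * T x - Real.log Z * r x) Q :=
      hrT_int.sub (hr_int.const_mul _)
    have h6 : Integrable (fun x => Real.exp (T x) / Z) Q := hexp_int.div_const Z
    rw [integral_sub hr_int h6, integral_sub hrlog_int h5,
      integral_sub hrT_int (hr_int.const_mul (Real.log Z)),
      integral_div, integral_const_mul, hr_int1] at hmono
    rw [← hZdef, div_self hZpos.ne'] at hmono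
    linarith
  -- properties of r₀
  have hr₀_meas : Measurable fun x => Real.exp (T x) / Z :=
    (Real.measurable_exp.comp hT_meas).div_const _
  have hr₀_nonneg : ∀ x, 0 ≤ Real.exp (T x) / Z :=
    fun x => div_nonneg (Real.exp_pos _).le hZpos.le
  have hr₀_bdd : ∀ x, |Real.exp (T x) / Z| ≤ Real.exp C / Z := by
    intro x
    rw [abs_of_nonneg (hr₀_nonneg x)]
    gcongr
    exact (le_abs_self _).trans (hTC x)
  have hr₀_int1 : ∫ x, Real.exp (T x) / Z ∂Q = 1 := by
    rw [integral_div, ← hZdef, div_self hZpos.ne']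
  have hr₀T_int : Integrable (fun x => (Real.exp (T x) / Z) * T x) Q := by
    apply aux_integrable (hr₀_meas.mul hT_meas) (C := (Real.exp C / Z) * C)
    intro x
    rw [Pi.mul_apply, abs_mul]
    exact mul_le_mul (hr₀_bdd x) (hTC x) (abs_nonneg _)
      (le_trans (abs_nonneg _) (hr₀_bdd x))
  have hr₀log_int : Integrable (fun x => (Real.exp (T x) / Z) * Real.log (Real.exp (T x) / Z)) Q := by
    apply aux_integrable (hr₀_meas.mul (Real.measurable_log.comp hr₀_meas))
      (C := 1 + (Real.exp C / Z) * |Real.log (Real.exp C / Z)|)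
    intro x
    exact aux_abs_mul_log_le (hr₀_nonneg x)
      ((le_abs_self _).trans (hr₀_bdd x))
  -- part 1
  have hpart1 : ∫ x, (Real.exp (T x) / Z) * Real.log (Real.exp (T x) / Z) ∂Q
      - ∫ x, (Real.exp (T x) / Z) * T x ∂Q = -Real.log Z := by
    rw [← integral_sub hr₀log_int hr₀T_int]
    have heq : ∀ x, (Real.exp (T x) / Z) * Real.log (Real.exp (T x) / Z)
        - (Real.exp (T x) / Z) * T x = (-Real.log Z) * (Real.exp (T x) / Z) := by
      intro x
      rw [Real.log_div (Real.exp_ne_zero _) hZpos.ne', Real.log_exp]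
      ring
    rw [integral_congr_ae (ae_of_all _ heq), integral_const_mul, hr₀_int1, mul_one]
  have hr₀int_int : Integrable (fun x => Real.exp (T x) / Z) Q := hexp_int.div_const Z
  subst hr₀
  simp only [← hZdef]
  refine ⟨hpart1, ?_⟩
  have hmem : (∫ x, T x ∂P - Real.log Z) ∈ {ℓ : ℝ | ∃ r : X → ℝ, Measurable r ∧
      (∃ C : ℝ, ∀ x, |r x| ≤ C) ∧ (∀ x, 0 ≤ r x) ∧ (∫ x, r x ∂Q = 1) ∧
      ℓ = ∫ x, r x * Real.log (r x) ∂Q + ∫ x, T x ∂P - ∫ x, r x * T x ∂Q} := by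
    exact ⟨fun x => Real.exp (T x) / Z, hr₀_meas, ⟨Real.exp C / Z, hr₀_bdd⟩, hr₀_nonneg,
      hr₀_int1, by linarith [hpart1]⟩
  apply le_antisymm
  · apply csInf_le
    · refine ⟨∫ x, T x ∂P - Real.log Z, ?_⟩
      rintro ℓ ⟨r, hm, hb, hn, hi, rfl⟩
      have := key r hm hb hn hi
      linarith
    · exact hmem
  · apply le_csInf ⟨_, hmem⟩
    rintro ℓ ⟨r, hm, hb, hn, hi, rfl⟩
    have := key r hm hb hn hi
    linarith
end

section
/- (Theorem C.1, χ² case.) Let f(u) = (u − 1)². Let T : X → ℝ be bounded measurable with T(x) − E_Q[T] + 2 ≥ 0 for all x. Then r₀ = (T − E_Q[T] + 2)/2 belongs to Δ(Q) and minimizes r ↦ E_Q[(r − 1)²] − E_Q[r·T] over Δ(Q): for every r ∈ Δ(Q), E_Q[(r − 1)²] − E_Q[r·T] ≥ E_Q[(r₀ − 1)²] − E_Q[r₀·T]. -/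
open MeasureTheory Real Set

private lemma integrable_of_bdd' {X : Type*} [MeasurableSpace X]
    (Q : Measure X) [IsFiniteMeasure Q] {f : X → ℝ} (hf : Measurable f)
    (h : ∃ C : ℝ, ∀ x, |f x| ≤ C) : Integrable f Q := by
  obtain ⟨C, hC⟩ := h
  exact (integrable_const C).mono' hf.aestronglyMeasurable
    (Filter.Eventually.of_forall fun x => by simpa using hC x)

private lemma bdd_mul' {X : Type*} {f g : X → ℝ}
    (hf : ∃ C : ℝ, ∀ x, |f x| ≤ C) (hg : ∃ C : ℝ, ∀ x, |g x| ≤ C) :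
    ∃ C : ℝ, ∀ x, |f x * g x| ≤ C := by
  obtain ⟨C, hC⟩ := hf
  obtain ⟨D, hD⟩ := hg
  refine ⟨|C| * |D|, fun x => ?_⟩
  rw [abs_mul]
  exact mul_le_mul ((hC x).trans (le_abs_self C)) ((hD x).trans (le_abs_self D))
    (abs_nonneg _) (abs_nonneg _)

private lemma bdd_add' {X : Type*} {f g : X → ℝ}
    (hf : ∃ C : ℝ, ∀ x, |f x| ≤ C) (hg : ∃ C : ℝ, ∀ x, |g x| ≤ C) :
    ∃ C : ℝ, ∀ x, |f x + g x| ≤ C := by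
  obtain ⟨C, hC⟩ := hf
  obtain ⟨D, hD⟩ := hg
  exact ⟨C + D, fun x => (abs_add_le _ _).trans (add_le_add (hC x) (hD x))⟩

private lemma bdd_sub' {X : Type*} {f g : X → ℝ}
    (hf : ∃ C : ℝ, ∀ x, |f x| ≤ C) (hg : ∃ C : ℝ, ∀ x, |g x| ≤ C) :
    ∃ C : ℝ, ∀ x, |f x - g x| ≤ C := by
  obtain ⟨D, hD⟩ := hg
  simpa [sub_eq_add_neg] using bdd_add' (g := fun x => -g x) hf ⟨D, fun x => by simpa using hD x⟩

private lemma bdd_const' {X : Type*} (c : ℝ) :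
    ∃ C : ℝ, ∀ x : X, |(fun _ : X => c) x| ≤ C := ⟨|c|, fun _ => le_rfl⟩

/-- Theorem C.1 (χ² case): for `f(u) = (u - 1)²`, if `T(x) - E_Q[T] + 2 ≥ 0` for
all `x`, then `r₀ = (T - E_Q[T] + 2)/2` belongs to `Δ(Q)` and minimizes
`r ↦ E_Q[(r - 1)²] - E_Q[r T]` over `Δ(Q)`. -/
theorem chi_squared_wgan_optimal_ratio
    {X : Type*} [MeasurableSpace X]
    (Q : Measure X) [IsProbabilityMeasure Q]
    (T : X → ℝ) (hT_meas : Measurable T) (hT_bdd : ∃ C : ℝ, ∀ x, |T x| ≤ C)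
    (hT_pos : ∀ x, 0 ≤ T x - ∫ y, T y ∂Q + 2)
    (r₀ : X → ℝ) (hr₀ : r₀ = fun x => (T x - ∫ y, T y ∂Q + 2) / 2) :
    (Measurable r₀ ∧ (∃ C : ℝ, ∀ x, |r₀ x| ≤ C) ∧ (∀ x, 0 ≤ r₀ x) ∧
      ∫ x, r₀ x ∂Q = 1) ∧
    ∀ r : X → ℝ, Measurable r → (∃ C : ℝ, ∀ x, |r x| ≤ C) → (∀ x, 0 ≤ r x) →
      (∫ x, r x ∂Q = 1) →
      ∫ x, (r x - 1) ^ 2 ∂Q - ∫ x, r x * T x ∂Q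
        ≥ ∫ x, (r₀ x - 1) ^ 2 ∂Q - ∫ x, r₀ x * T x ∂Q := by
  set m : ℝ := ∫ y, T y ∂Q with hm
  have hTint : Integrable T Q := integrable_of_bdd' Q hT_meas hT_bdd
  have hr₀_meas : Measurable r₀ := by
    rw [hr₀]; exact ((hT_meas.sub measurable_const).add measurable_const).div_const 2
  have hr₀_bdd : ∃ C : ℝ, ∀ x, |r₀ x| ≤ C := by
    have h1 : ∃ C : ℝ, ∀ x, |T x - m + 2| ≤ C :=
      bdd_add' (bdd_sub' hT_bdd (bdd_const' m)) (bdd_const' 2)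
    obtain ⟨C, hC⟩ := h1
    refine ⟨C / 2, fun x => ?_⟩
    rw [hr₀]
    simp only [abs_div, abs_two]
    exact div_le_div_of_nonneg_right (hC x) (by norm_num) |>.trans_eq rfl
  have hr₀_nonneg : ∀ x, 0 ≤ r₀ x := by
    intro x; rw [hr₀]; exact div_nonneg (hT_pos x) (by norm_num)
  have hr₀_int : Integrable r₀ Q := integrable_of_bdd' Q hr₀_meas hr₀_bdd
  have hr₀_integral : ∫ x, r₀ x ∂Q = 1 := by
    rw [hr₀]
    simp only [integral_div]
    have e0 : (fun x => T x - m + 2) = fun x => T x + (2 - m) := funext fun x => by ring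
    have e1 : ∫ x, (T x - m + 2) ∂Q = ∫ x, (T x + (2 - m)) ∂Q := by rw [e0]
    rw [e1, integral_add hTint (integrable_const _), integral_const]
    simp [← hm]
  refine ⟨⟨hr₀_meas, hr₀_bdd, hr₀_nonneg, hr₀_integral⟩, ?_⟩
  have key : ∀ r : X → ℝ, Measurable r → (∃ C : ℝ, ∀ x, |r x| ≤ C) →
      (∫ x, r x ∂Q = 1) →
      ∫ x, (r x - 1) ^ 2 ∂Q - ∫ x, r x * T x ∂Q
        = (∫ x, (r x - r₀ x) ^ 2 ∂Q) + (1 - m - ∫ x, (r₀ x) ^ 2 ∂Q) := by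
    intro r hr_meas hr_bdd hr_int1
    have hr_int : Integrable r Q := integrable_of_bdd' Q hr_meas hr_bdd
    have b1 : ∃ C : ℝ, ∀ x, |(r x - 1) ^ 2| ≤ C := by
      simpa [sq] using bdd_mul' (bdd_sub' hr_bdd (bdd_const' 1)) (bdd_sub' hr_bdd (bdd_const' 1))
    have b2 : ∃ C : ℝ, ∀ x, |r x * T x| ≤ C := bdd_mul' hr_bdd hT_bdd
    have b3 : ∃ C : ℝ, ∀ x, |(r x - r₀ x) ^ 2| ≤ C := by
      simpa [sq] using bdd_mul' (bdd_sub' hr_bdd hr₀_bdd) (bdd_sub' hr_bdd hr₀_bdd)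
    have b4 : ∃ C : ℝ, ∀ x, |(r₀ x) ^ 2| ≤ C := by
      simpa [sq] using bdd_mul' hr₀_bdd hr₀_bdd
    have i1 : Integrable (fun x => (r x - 1) ^ 2) Q :=
      integrable_of_bdd' Q (by fun_prop) b1
    have i2 : Integrable (fun x => r x * T x) Q :=
      integrable_of_bdd' Q (hr_meas.mul hT_meas) b2
    have i3 : Integrable (fun x => (r x - r₀ x) ^ 2) Q :=
      integrable_of_bdd' Q (by fun_prop) b3
    have i4 : Integrable (fun x => (r₀ x) ^ 2) Q :=
      integrable_of_bdd' Q (by fun_prop) b4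
    have i5 : Integrable (fun x => 1 - m * r x) Q :=
      (integrable_const 1).sub (hr_int.const_mul m)
    have hpt : (fun x => (r x - 1) ^ 2 - r x * T x)
        = fun x => ((r x - r₀ x) ^ 2 - (r₀ x) ^ 2) + (1 - m * r x) := by
      funext x
      have : T x = 2 * r₀ x - 2 + m := by rw [hr₀]; ring
      rw [this]; ring
    have e1 : ∫ x, ((r x - r₀ x) ^ 2 - (r₀ x) ^ 2 + (1 - m * r x)) ∂Q
        = ∫ x, ((r x - r₀ x) ^ 2 - (r₀ x) ^ 2) ∂Q + ∫ x, (1 - m * r x) ∂Q :=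
      integral_add (i3.sub i4) i5
    have e2 : ∫ x, ((r x - r₀ x) ^ 2 - (r₀ x) ^ 2) ∂Q
        = ∫ x, (r x - r₀ x) ^ 2 ∂Q - ∫ x, (r₀ x) ^ 2 ∂Q := integral_sub i3 i4
    have e3 : ∫ x, (1 - m * r x) ∂Q
        = ∫ x, (1 : ℝ) ∂Q - ∫ x, m * r x ∂Q :=
      integral_sub (integrable_const 1) (hr_int.const_mul m)
    have e4 : ∫ x, m * r x ∂Q = m * ∫ x, r x ∂Q := integral_const_mul m r
    rw [← integral_sub i1 i2, hpt, e1, e2, e3, e4, hr_int1, integral_const]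
    simp
    ring
  intro r hr_meas hr_bdd hr_nonneg hr_int1
  rw [key r hr_meas hr_bdd hr_int1, key r₀ hr₀_meas hr₀_bdd hr₀_integral]
  have h0 : ∫ x, (r₀ x - r₀ x) ^ 2 ∂Q = 0 := by simp
  have hpos : 0 ≤ ∫ x, (r x - r₀ x) ^ 2 ∂Q :=
    integral_nonneg fun x => sq_nonneg _
  linarith
end

section
/- (Value of the χ²-WGAN inner minimization, Appendix C.) Let f(u) = (u − 1)². Let T : X → ℝ be bounded measurable with T(x) − E_Q[T] + 2 ≥ 0 for all x, and set r₀ = (T − E_Q[T] + 2)/2. Then ℓ_f(T, r₀; P, Q) = E_P[T] − E_Q[T] − Var_Q[T]/4, where Var_Q[T] = E_Q[T²] − (E_Q[T])². -/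
open MeasureTheory Real Set

/-- Value of the χ²-WGAN inner minimization: for `f(u) = (u - 1)²` and
`r₀ = (T - E_Q[T] + 2)/2`, `ℓ_f(T, r₀; P, Q) = E_P[T] - E_Q[T] - Var_Q[T]/4`. -/
theorem chi_squared_wgan_inner_value
    {X : Type*} [MeasurableSpace X]
    (P Q : Measure X) [IsProbabilityMeasure P] [IsProbabilityMeasure Q]
    (hPQ : P ≪ Q)
    (T : X → ℝ) (hT_meas : Measurable T) (hT_bdd : ∃ C : ℝ, ∀ x, |T x| ≤ C)
    (hT_pos : ∀ x, 0 ≤ T x - ∫ y, T y ∂Q + 2)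
    (r₀ : X → ℝ) (hr₀ : r₀ = fun x => (T x - ∫ y, T y ∂Q + 2) / 2) :
    ∫ x, (r₀ x - 1) ^ 2 ∂Q + ∫ x, T x ∂P - ∫ x, r₀ x * T x ∂Q
      = ∫ x, T x ∂P - ∫ x, T x ∂Q
        - (∫ x, (T x) ^ 2 ∂Q - (∫ x, T x ∂Q) ^ 2) / 4 := by
  obtain ⟨C, hC⟩ := hT_bdd
  set m : ℝ := ∫ y, T y ∂Q with hm
  have hTint : Integrable T Q := by
    refine (integrable_const C).mono' hT_meas.aestronglyMeasurable ?_
    filter_upwards with x using by simpa using hC x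
  have hT2int : Integrable (fun x => T x ^ 2) Q := by
    refine (integrable_const (C ^ 2)).mono' (hT_meas.pow_const 2).aestronglyMeasurable ?_
    filter_upwards with x
    rw [norm_pow]
    exact pow_le_pow_left₀ (norm_nonneg _) (hC x) 2
  set A : ℝ := ∫ x, T x ^ 2 ∂Q with hA
  have h1 : ∫ x, (r₀ x - 1) ^ 2 ∂Q = A / 4 - m / 2 * m + m ^ 2 / 4 := by
    have heq : (fun x => (r₀ x - 1) ^ 2)
        = fun x => (1 / 4) * T x ^ 2 + ((-(m / 2)) * T x + m ^ 2 / 4) := by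
      funext x; rw [hr₀]; ring
    have i2 : Integrable (fun x => -(m / 2) * T x + m ^ 2 / 4) Q :=
      (hTint.const_mul _).add (integrable_const _)
    rw [heq, integral_add (hT2int.const_mul _) i2,
      integral_add (hTint.const_mul _) (integrable_const _),
      integral_const_mul, integral_const_mul, integral_const]
    simp [← hm, ← hA]
    ring
  have h2 : ∫ x, r₀ x * T x ∂Q = A / 2 + (2 - m) / 2 * m := by
    have heq : (fun x => r₀ x * T x)
        = fun x => (1 / 2) * T x ^ 2 + ((2 - m) / 2) * T x := by
      funext x; rw [hr₀]; ring
    rw [heq, integral_add (hT2int.const_mul _) (hTint.const_mul _),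
      integral_const_mul, integral_const_mul]
    simp [← hm, ← hA]
    ring
  rw [h1, h2]
  ring
end

section
/- (The f-WGAN divergence with R = Δ(Q) equals the f-divergence.) Let F be the set of bounded measurable functions T : X → ℝ such that T(x) lies in the image of f' on [0,∞) for every x and x ↦ f*(T(x)) is Q-integrable. Assume the Radon–Nikodym derivative dP/dQ is Q-essentially bounded and f∘(dP/dQ) and f*∘f'∘(dP/dQ) are Q-integrable. Then sup_{T ∈ F} inf_{r ∈ Δ(Q)} ℓ_f(T, r; P, Q) = D_f(P‖Q). -/
open MeasureTheory Real Set

/-- The critic objective `ℓ_f(T, r; P, Q) = E_Q[f∘r] + E_P[T] - E_Q[r·T]`. -/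
noncomputable def ellF {X : Type*} [MeasurableSpace X]
    (f : ℝ → ℝ) (T r : X → ℝ) (P Q : MeasureTheory.Measure X) : ℝ :=
  ∫ x, f (r x) ∂Q + ∫ x, T x ∂P - ∫ x, r x * T x ∂Q

/-- Membership in the critic family `F`: bounded measurable `T` with values in the
image of `f'` on `[0,∞)` and with `f* ∘ T` Q-integrable. -/
def memF {X : Type*} [MeasurableSpace X] (f' fstar : ℝ → ℝ)
    (Q : MeasureTheory.Measure X) (T : X → ℝ) : Prop :=
  Measurable T ∧ (∃ C : ℝ, ∀ x, |T x| ≤ C) ∧ (∀ x, ∃ u : ℝ, 0 ≤ u ∧ f' u = T x) ∧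
    MeasureTheory.Integrable (fun x => fstar (T x)) Q

/-- Membership in `Δ(Q)`: bounded measurable nonnegative `r` with `E_Q[r] = 1`. -/
def memDelta {X : Type*} [MeasurableSpace X]
    (Q : MeasureTheory.Measure X) (r : X → ℝ) : Prop :=
  Measurable r ∧ (∃ C : ℝ, ∀ x, |r x| ≤ C) ∧ (∀ x, 0 ≤ r x) ∧ ∫ x, r x ∂Q = 1


section Aux
variable {f f' : ℝ → ℝ}

/-- Gradient inequality for a convex differentiable function on `[0,∞)`. -/
lemma grad_ineq (hf_conv : ConvexOn ℝ (Set.Ici (0 : ℝ)) f)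
    (hf_diff : ∀ u ∈ Set.Ici (0 : ℝ), HasDerivWithinAt f (f' u) (Set.Ici (0 : ℝ)) u)
    {u z : ℝ} (hu : 0 ≤ u) (hz : 0 ≤ z) :
    f u + f' u * (z - u) ≤ f z := by
  rcases lt_trichotomy u z with h | h | h
  · have hs := hf_conv.le_slope_of_hasDerivWithinAt hu hz h (hf_diff u hu)
    rw [slope_def_field] at hs
    have hzu : (0:ℝ) < z - u := by linarith
    rw [le_div_iff₀ hzu] at hs
    linarith
  · simp [h]
  · have hupos : (0:ℝ) < u := lt_of_le_of_lt hz h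
    have hmem : Set.Ici (0:ℝ) ∈ nhdsWithin u (Set.Iio u) := by
      rw [mem_nhdsWithin]
      exact ⟨Set.Ioi 0, isOpen_Ioi, hupos, fun t ht => Set.mem_Ici.mpr (le_of_lt ht.1)⟩
    have hderiv : HasDerivWithinAt f (f' u) (Set.Iio u) u :=
      (hf_diff u hu).mono_of_mem_nhdsWithin hmem
    have hs := hf_conv.slope_le_of_hasDerivWithinAt_Iio hz hu h hderiv
    rw [slope_def_field] at hs
    have huz : (0:ℝ) < u - z := by linarith
    rw [div_le_iff₀ huz] at hs
    nlinarith

lemma f'_monoOn (hf_conv : ConvexOn ℝ (Set.Ici (0 : ℝ)) f)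
    (hf_diff : ∀ u ∈ Set.Ici (0 : ℝ), HasDerivWithinAt f (f' u) (Set.Ici (0 : ℝ)) u)
    {u v : ℝ} (hu : 0 ≤ u) (huv : u ≤ v) : f' u ≤ f' v := by
  have hv : 0 ≤ v := hu.trans huv
  rcases eq_or_lt_of_le huv with rfl | hlt
  · exact le_refl _
  · have h1 := grad_ineq hf_conv hf_diff hu hv
    have h2 := grad_ineq hf_conv hf_diff hv hu
    nlinarith

lemma fstar_eq_at (hf_conv : ConvexOn ℝ (Set.Ici (0 : ℝ)) f)
    (hf_diff : ∀ u ∈ Set.Ici (0 : ℝ), HasDerivWithinAt f (f' u) (Set.Ici (0 : ℝ)) u)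
    {fstar : ℝ → ℝ}
    (hfstar : ∀ t : ℝ, fstar t = sSup {y : ℝ | ∃ u : ℝ, 0 ≤ u ∧ y = t * u - f u})
    {u : ℝ} (hu : 0 ≤ u) :
    fstar (f' u) = f' u * u - f u := by
  rw [hfstar]
  refine IsGreatest.csSup_eq ⟨⟨u, hu, rfl⟩, ?_⟩
  rintro y ⟨z, hz, rfl⟩
  have := grad_ineq hf_conv hf_diff hu hz
  linarith

lemma fstar_ge (hf_conv : ConvexOn ℝ (Set.Ici (0 : ℝ)) f)
    (hf_diff : ∀ u ∈ Set.Ici (0 : ℝ), HasDerivWithinAt f (f' u) (Set.Ici (0 : ℝ)) u)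
    {fstar : ℝ → ℝ}
    (hfstar : ∀ t : ℝ, fstar t = sSup {y : ℝ | ∃ u : ℝ, 0 ≤ u ∧ y = t * u - f u})
    {t z : ℝ} (ht : ∃ u : ℝ, 0 ≤ u ∧ f' u = t) (hz : 0 ≤ z) :
    t * z - f z ≤ fstar t := by
  obtain ⟨u, hu, rfl⟩ := ht
  rw [fstar_eq_at hf_conv hf_diff hfstar hu]
  have := grad_ineq hf_conv hf_diff hu hz
  linarith

/-- `f ∘ max · 0` is continuous when `f` is differentiable within `[0,∞)`. -/
lemma gcont (hf_diff : ∀ u ∈ Set.Ici (0 : ℝ), HasDerivWithinAt f (f' u) (Set.Ici (0 : ℝ)) u) :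
    Continuous (fun t : ℝ => f (max t 0)) := by
  rw [continuous_iff_continuousAt]
  intro t
  have hmax : ContinuousAt (fun t : ℝ => max t 0) t :=
    (continuous_id.max continuous_const).continuousAt
  have hf : ContinuousWithinAt f (Set.Ici 0) (max t 0) :=
    (hf_diff _ (le_max_right t 0)).continuousWithinAt
  have h2 : ContinuousWithinAt (f ∘ fun t : ℝ => max t 0) Set.univ t :=
    ContinuousWithinAt.comp hf hmax.continuousWithinAt (fun y _ => le_max_right y 0)
  rw [continuousWithinAt_univ] at h2
  exact h2

lemma int_bdd {X : Type*} [MeasurableSpace X] {Q : Measure X} [IsFiniteMeasure Q]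
    {h : X → ℝ} (hm : AEStronglyMeasurable h Q) {C : ℝ} (hb : ∀ᵐ x ∂Q, |h x| ≤ C) :
    Integrable h Q :=
  ⟨hm, HasFiniteIntegral.of_bounded (by simpa [Real.norm_eq_abs] using hb)⟩

end Aux

/-- The f-WGAN divergence with `R = Δ(Q)` equals the f-divergence:
`sup_{T ∈ F} inf_{r ∈ Δ(Q)} ℓ_f(T, r; P, Q) = D_f(P‖Q)`. -/
theorem f_wgan_divergence_delta_eq_D_f
    {X : Type*} [MeasurableSpace X]
    (P Q : Measure X) [IsProbabilityMeasure P] [IsProbabilityMeasure Q]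
    (hPQ : P ≪ Q)
    (f f' fstar : ℝ → ℝ)
    (hf_conv : ConvexOn ℝ (Set.Ici (0 : ℝ)) f)
    (hf_diff : ∀ u ∈ Set.Ici (0 : ℝ), HasDerivWithinAt f (f' u) (Set.Ici (0 : ℝ)) u)
    (hf_one : f 1 = 0)
    (hfstar : ∀ t : ℝ, fstar t = sSup {y : ℝ | ∃ u : ℝ, 0 ≤ u ∧ y = t * u - f u})
    (hrho_bdd : ∃ C : ℝ, ∀ᵐ x ∂Q, (P.rnDeriv Q x).toReal ≤ C)
    (hf_rho_int : Integrable (fun x => f ((P.rnDeriv Q x).toReal)) Q)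
    (hfstar_f'_rho_int : Integrable (fun x => fstar (f' ((P.rnDeriv Q x).toReal))) Q) :
    sSup {v : ℝ | ∃ T : X → ℝ, memF f' fstar Q T ∧
        v = sInf {ℓ : ℝ | ∃ r : X → ℝ, memDelta Q r ∧ ℓ = ellF f T r P Q}}
      = ∫ x, f ((P.rnDeriv Q x).toReal) ∂Q := by
  classical
  set ρ : X → ℝ := fun x => (P.rnDeriv Q x).toReal with hρdef
  have hρ_meas : Measurable ρ := (Measure.measurable_rnDeriv P Q).ennreal_toReal
  have hρ_nonneg : ∀ x, 0 ≤ ρ x := fun x => ENNReal.toReal_nonneg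
  obtain ⟨C₀, hC₀⟩ := hrho_bdd
  set C : ℝ := max C₀ 1 with hCdef
  have hC1 : (1:ℝ) ≤ C := le_max_right _ _
  have hC0 : (0:ℝ) ≤ C := zero_le_one.trans hC1
  have hρC : ∀ᵐ x ∂Q, ρ x ≤ C := hC₀.mono fun x hx => hx.trans (le_max_left _ _)
  set D : ℝ := ∫ x, f (ρ x) ∂Q with hDdef
  -- the truncated Radon-Nikodym derivative, a member of Δ(Q)
  set r₀ : X → ℝ := fun x => if ρ x ≤ C then ρ x else 1 with hr₀def
  have hr₀_meas : Measurable r₀ :=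
    Measurable.ite (measurableSet_le hρ_meas measurable_const) hρ_meas measurable_const
  have hr₀_nonneg : ∀ x, 0 ≤ r₀ x := fun x => by
    by_cases h : ρ x ≤ C <;> simp [hr₀def, h, hρ_nonneg x]
  have hr₀_bdd : ∀ x, |r₀ x| ≤ C := fun x => by
    rw [abs_of_nonneg (hr₀_nonneg x)]
    by_cases h : ρ x ≤ C <;> simp [hr₀def, h] <;> linarith
  have hr₀_ae : r₀ =ᵐ[Q] ρ := hρC.mono fun x hx => by simp [hr₀def, hx]
  have hρ_int_one : ∫ x, ρ x ∂Q = 1 := by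
    rw [hρdef, Measure.integral_toReal_rnDeriv hPQ]; simp
  have hr₀_mem : memDelta Q r₀ :=
    ⟨hr₀_meas, ⟨C, hr₀_bdd⟩, hr₀_nonneg, (integral_congr_ae hr₀_ae).trans hρ_int_one⟩
  -- E_P[T] = E_Q[ρ T]
  have hEP : ∀ T : X → ℝ, ∫ x, ρ x * T x ∂Q = ∫ x, T x ∂P := fun T => by
    have h := MeasureTheory.integral_rnDeriv_smul hPQ (f := T)
    simpa [smul_eq_mul, hρdef] using h
  -- the value of the objective at r₀ is D, for any T
  have key_r₀ : ∀ T : X → ℝ, ellF f T r₀ P Q = D := by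
    intro T
    have h1 : ∫ x, f (r₀ x) ∂Q = D :=
      integral_congr_ae (hr₀_ae.mono fun x hx => by simp only [hx])
    have h2 : ∫ x, r₀ x * T x ∂Q = ∫ x, T x ∂P := by
      rw [← hEP T]
      exact integral_congr_ae (hr₀_ae.mono fun x hx => by simp only [hx])
    rw [ellF, h1, h2]; ring
  -- integrability of f ∘ r for r ∈ Δ(Q)
  obtain ⟨g, hg_cont, hg_eq⟩ : ∃ g : ℝ → ℝ, Continuous g ∧ ∀ t : ℝ, 0 ≤ t → g t = f t :=
    ⟨fun t => f (max t 0), gcont hf_diff, fun t ht => by simp [max_eq_left ht]⟩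
  have hfr_int : ∀ (r : X → ℝ) (Cr : ℝ), Measurable r → (∀ x, 0 ≤ r x) → (∀ x, |r x| ≤ Cr) →
      Integrable (fun x => f (r x)) Q := by
    intro r Cr hm h0 hb
    obtain ⟨B, hB⟩ := (isCompact_Icc : IsCompact (Icc (0:ℝ) Cr)).exists_bound_of_continuousOn
      hg_cont.continuousOn
    have heq : (fun x => f (r x)) = fun x => g (r x) := funext fun x => (hg_eq _ (h0 x)).symm
    rw [heq]
    refine int_bdd ((hg_cont.measurable.comp hm).aestronglyMeasurable) (C := B)
      (ae_of_all _ fun x => ?_)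
    have hx : r x ∈ Icc 0 Cr := ⟨h0 x, (abs_le.mp (hb x)).2⟩
    simpa [Real.norm_eq_abs] using hB _ hx
  -- general lower bound on the objective
  have hell_lb : ∀ (T : X → ℝ), Measurable T → (∃ Ct : ℝ, ∀ x, |T x| ≤ Ct) →
      (∀ x, ∃ u : ℝ, 0 ≤ u ∧ f' u = T x) → Integrable (fun x => fstar (T x)) Q →
      ∀ (r : X → ℝ), memDelta Q r →
      ∫ x, T x ∂P - ∫ x, fstar (T x) ∂Q ≤ ellF f T r P Q := by
    rintro T hTm ⟨Ct, hTb⟩ hTr hTfs r ⟨hrm, ⟨Cr, hrb⟩, hr0, hri⟩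
    have hfr : Integrable (fun x => f (r x)) Q := hfr_int r Cr hrm hr0 hrb
    have hrT : Integrable (fun x => r x * T x) Q := by
      refine int_bdd ((hrm.mul hTm).aestronglyMeasurable) (C := Cr * Ct)
        (ae_of_all _ fun x => ?_)
      rw [abs_mul]
      exact mul_le_mul (hrb x) (hTb x) (abs_nonneg _) ((abs_nonneg _).trans (hrb x))
    have hpt : (fun x => -(fstar (T x))) ≤ fun x => f (r x) - r x * T x := fun x => by
      have := fstar_ge hf_conv hf_diff hfstar (hTr x) (hr0 x)
      simp only []
      linarith
    have hmono : ∫ x, -(fstar (T x)) ∂Q ≤ ∫ x, (f (r x) - r x * T x) ∂Q :=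
      integral_mono hTfs.neg (hfr.sub hrT) hpt
    rw [integral_neg, integral_sub hfr hrT] at hmono
    rw [ellF]; linarith
  -- the optimal critic T₀
  set T₀ : X → ℝ := fun x => f' (min (ρ x) C) with hT₀def
  have hmin_nonneg : ∀ x, 0 ≤ min (ρ x) C := fun x => le_min (hρ_nonneg x) hC0
  have hT₀_meas : Measurable T₀ := by
    have hmono : Monotone (fun t : ℝ => f' (max t 0)) := fun a b hab =>
      f'_monoOn hf_conv hf_diff (le_max_right a 0) (max_le_max hab le_rfl)
    have heq : T₀ = fun x => f' (max (min (ρ x) C) 0) := funext fun x => by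
      rw [max_eq_left (hmin_nonneg x)]
    rw [heq]
    exact hmono.measurable.comp (hρ_meas.min measurable_const)
  have hT₀_bdd : ∀ x, |T₀ x| ≤ |f' 0| + |f' C| := fun x => by
    have h1 : f' 0 ≤ T₀ x := f'_monoOn hf_conv hf_diff le_rfl (hmin_nonneg x)
    have h2 : T₀ x ≤ f' C := f'_monoOn hf_conv hf_diff (hmin_nonneg x) (min_le_right _ _)
    rw [abs_le]
    constructor
    · linarith [neg_abs_le (f' 0), abs_nonneg (f' C)]
    · linarith [le_abs_self (f' C), abs_nonneg (f' 0)]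
  have hT₀_ae : ∀ᵐ x ∂Q, T₀ x = f' (ρ x) := hρC.mono fun x hx => by
    simp [hT₀def, min_eq_left hx]
  have hT₀_fstar_int : Integrable (fun x => fstar (T₀ x)) Q :=
    hfstar_f'_rho_int.congr (hT₀_ae.mono fun x hx => by simp only [hx]; rfl)
  have hT₀_mem : memF f' fstar Q T₀ :=
    ⟨hT₀_meas, ⟨_, hT₀_bdd⟩, fun x => ⟨min (ρ x) C, hmin_nonneg x, rfl⟩, hT₀_fstar_int⟩
  -- ∫ T₀ dP - ∫ f*(T₀) dQ = D
  have hρT₀ : Integrable (fun x => ρ x * T₀ x) Q := by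
    have hb : Integrable (fun x => r₀ x * T₀ x) Q := by
      refine int_bdd ((hr₀_meas.mul hT₀_meas).aestronglyMeasurable)
        (C := C * (|f' 0| + |f' C|)) (ae_of_all _ fun x => ?_)
      rw [abs_mul]
      exact mul_le_mul (hr₀_bdd x) (hT₀_bdd x) (abs_nonneg _) hC0
    exact hb.congr (hr₀_ae.mono fun x hx => by simp only [hx])
  have hsum : ∫ x, ρ x * T₀ x ∂Q - ∫ x, fstar (T₀ x) ∂Q = D := by
    rw [← integral_sub hρT₀ hT₀_fstar_int]
    refine integral_congr_ae ?_
    filter_upwards [hT₀_ae] with x hx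
    rw [hx, fstar_eq_at hf_conv hf_diff hfstar (hρ_nonneg x)]
    ring
  -- every value of the objective at T₀ is ≥ D
  have hD_le : ∀ ℓ ∈ {ℓ : ℝ | ∃ r : X → ℝ, memDelta Q r ∧ ℓ = ellF f T₀ r P Q}, D ≤ ℓ := by
    rintro ℓ ⟨r, hr, rfl⟩
    have h := hell_lb T₀ hT₀_meas ⟨_, hT₀_bdd⟩
      (fun x => ⟨min (ρ x) C, hmin_nonneg x, rfl⟩) hT₀_fstar_int r hr
    rw [← hEP T₀] at h
    linarith
  have hInf₀ : sInf {ℓ : ℝ | ∃ r : X → ℝ, memDelta Q r ∧ ℓ = ellF f T₀ r P Q} = D :=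
    IsLeast.csInf_eq ⟨⟨r₀, hr₀_mem, (key_r₀ T₀).symm⟩, hD_le⟩
  have hDmem_sup : D ∈ {v : ℝ | ∃ T : X → ℝ, memF f' fstar Q T ∧
      v = sInf {ℓ : ℝ | ∃ r : X → ℝ, memDelta Q r ∧ ℓ = ellF f T r P Q}} :=
    ⟨T₀, hT₀_mem, hInf₀.symm⟩
  have hv_le : ∀ v ∈ {v : ℝ | ∃ T : X → ℝ, memF f' fstar Q T ∧
      v = sInf {ℓ : ℝ | ∃ r : X → ℝ, memDelta Q r ∧ ℓ = ellF f T r P Q}}, v ≤ D := by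
    rintro v ⟨T, ⟨hTm, hTb, hTr, hTfs⟩, rfl⟩
    have hDmem : D ∈ {ℓ : ℝ | ∃ r : X → ℝ, memDelta Q r ∧ ℓ = ellF f T r P Q} :=
      ⟨r₀, hr₀_mem, (key_r₀ T).symm⟩
    refine csInf_le ⟨∫ x, T x ∂P - ∫ x, fstar (T x) ∂Q, ?_⟩ hDmem
    rintro ℓ ⟨r, hr, rfl⟩
    exact hell_lb T hTm hTb hTr hTfs r hr
  exact le_antisymm (csSup_le ⟨D, hDmem_sup⟩ hv_le) (le_csSup ⟨D, hv_le⟩ hDmem_sup)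
end
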